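/- arXiv:1712.06806 — 2 statements merged into one kernel-verified Lean document; each statement's English description precedes it below -/
import Mathlib

section
/- In the extended annihilation algebra A(B(p))^e of B(p), the element T - (1/p)L_{0,-1} is central: it commutes with T and with all L_{i,m} for i ≥ 0, m ≥ -1. -/
/-- Formal `ℂ`-linear combinations of the symbols `L_{i,m}`, `i ∈ ℤ≥0`, `m ∈ ℤ`
(only `m ≥ -1` is used). -/
abbrev AnnAlg := (ℕ × ℤ) →₀ ℂ

/-- `[L_{i,m}, L_{j,n}] = ((j+p)(m+1) - (i+p)(n+1)) L_{i+j,m+n}`, bilinearly. -/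
noncomputable def annBracket (p : ℂ) (x y : AnnAlg) : AnnAlg :=
  x.sum fun a ca => y.sum fun b cb =>
    (ca * cb * (((b.1 : ℂ) + p) * ((a.2 : ℂ) + 1) - ((a.1 : ℂ) + p) * ((b.2 : ℂ) + 1))) •
      Finsupp.single (a.1 + b.1, a.2 + b.2) (1 : ℂ)

/-- `[T, L_{i,m}] = -(m+1) L_{i,m-1}`, extended linearly. -/
noncomputable def tAction (x : AnnAlg) : AnnAlg :=
  x.sum fun a c => (c * (-((a.2 : ℂ) + 1))) • Finsupp.single (a.1, a.2 - 1) (1 : ℂ)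

/-- Elements of `A(B(p))^e = ℂT ⋉ A(B(p))`: pairs `(t, x)` representing `tT + x`. -/
abbrev ExtAnnAlg := ℂ × AnnAlg

/-- The bracket of `A(B(p))^e`. -/
noncomputable def extBracket (p : ℂ) (u v : ExtAnnAlg) : ExtAnnAlg :=
  (0, annBracket p u.2 v.2 + u.1 • tAction v.2 - v.1 • tAction u.2)

/-- In `A(B(p))^e`, the element `T - (1/p) L_{0,-1}` is central: it commutes with `T`
and with every basis element `L_{i,m}` (`i ≥ 0`, `m ≥ -1`). -/
theorem central_element (p : ℂ) (hp : p ≠ 0) :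
    extBracket p (1, -(p⁻¹ • Finsupp.single ((0 : ℕ), (-1 : ℤ)) (1 : ℂ))) ((1 : ℂ), 0) = 0 ∧
    ∀ (i : ℕ) (m : ℤ), (-1 : ℤ) ≤ m →
      extBracket p (1, -(p⁻¹ • Finsupp.single ((0 : ℕ), (-1 : ℤ)) (1 : ℂ)))
        (0, Finsupp.single (i, m) 1) = 0 := by
  have hs : -(p⁻¹ • Finsupp.single ((0 : ℕ), (-1 : ℤ)) (1 : ℂ)) =
      Finsupp.single ((0 : ℕ), (-1 : ℤ)) (-p⁻¹) := by
    rw [Finsupp.smul_single, ← Finsupp.single_neg, smul_eq_mul, mul_one]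
  have ht : tAction (Finsupp.single ((0 : ℕ), (-1 : ℤ)) (-p⁻¹)) = 0 := by
    rw [tAction, Finsupp.sum_single_index (by simp)]
    norm_num
  have ht' : tAction (-(p⁻¹ • Finsupp.single ((0 : ℕ), (-1 : ℤ)) (1 : ℂ))) = 0 := by
    rw [hs]; exact ht
  have h0 : tAction (0 : AnnAlg) = 0 := by
    rw [tAction, Finsupp.sum_zero_index]
  constructor
  · rw [extBracket]
    simp only [ht', h0, smul_zero, one_smul, sub_zero, add_zero]
    rw [hs, annBracket, Finsupp.sum_single_index (by simp), Finsupp.sum_zero_index]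
    rfl
  · intro i m _
    rw [extBracket, hs]
    simp only [ht, smul_zero, zero_smul, sub_zero, one_smul]
    have hb : annBracket p (Finsupp.single ((0 : ℕ), (-1 : ℤ)) (-p⁻¹))
        (Finsupp.single (i, m) (1 : ℂ)) = Finsupp.single (i, m - 1) (((m : ℂ) + 1)) := by
      rw [annBracket, Finsupp.sum_single_index (by simp),
        Finsupp.sum_single_index (by simp), Finsupp.smul_single]
      congr 1
      · simp [Prod.ext_iff]; omega
      · push_cast
        simp only [smul_eq_mul, mul_one, neg_add_cancel, mul_zero, zero_add, zero_sub, neg_div, neg_neg]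
        field_simp
    have hta : tAction (Finsupp.single (i, m) (1 : ℂ)) =
        Finsupp.single (i, m - 1) (-((m : ℂ) + 1)) := by
      rw [tAction, Finsupp.sum_single_index (by simp), Finsupp.smul_single]
      simp
    rw [hb, hta, ← Finsupp.single_add, add_neg_cancel, Finsupp.single_zero]
    rfl
end

section
/- Take p = -1 and β ∈ ℂ. The free rank-one ℂ[∂]-module M = ℂ[∂]v with λ-actions L_0 λ v = -(∂ + Δλ + α)v, L_1 λ v = βv, and L_i λ v = 0 for i ≥ 2 is a conformal module over B(-1). -/
open MvPolynomial

/-- Elements of `B(-1)`: coefficients in `ℂ[∂]` on the basis `{L_i}`. -/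
abbrev BlockAlg := ℕ →₀ Polynomial ℂ

/-- `ℂ[∂,λ,μ]`, with `∂ = X 0`, `λ = X 1`, `μ = X 2`. -/
abbrev P3 := MvPolynomial (Fin 3) ℂ

/-- The λ-action of `a = Σ f_i(∂) L_i ∈ B(-1)` with spectral parameter `s` on a module
element `w·v` of `M_{Δ,α,β}`: `L_0 λ v = -(∂+Δλ+α)v`, `L_1 λ v = βv`, `L_i λ v = 0`
for `i ≥ 2`. -/
noncomputable def act (Δ α β : ℂ) (a : BlockAlg) (w s : P3) : P3 :=
  (Polynomial.aeval (-s) (a 0)) * (aeval ![X 0 + s, X 1, X 2] w) *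
      (-(X 0 + C Δ * s + C α))
    + (Polynomial.aeval (-s) (a 1)) * (aeval ![X 0 + s, X 1, X 2] w) * C β

/-- The λ-bracket of `B(-1)`: `[f(∂)L_i λ g(∂)L_j] = f(-λ)g(∂+λ)((i-1)∂+(i+j-2)λ)L_{i+j}`. -/
noncomputable def BR (a b : BlockAlg) : ℕ →₀ P3 :=
  a.sum fun i f => b.sum fun j g =>
    Finsupp.single (i + j)
      ((Polynomial.aeval (-(X 1) : P3) f) * (Polynomial.aeval ((X 0 : P3) + X 1) g) *
        (C ((i : ℂ) - 1) * X 0 + C ((i : ℂ) + (j : ℂ) - 2) * X 1))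

/-- The action of an element of `ℂ[∂,λ]⊗B(-1)` (such as `[a λ b]`) with spectral
parameter `s` on `w·v`: coefficients get `∂ ↦ -s`, and only `L_0` and `L_1` act. -/
noncomputable def actC (Δ α β : ℂ) (c : ℕ →₀ P3) (w s : P3) : P3 :=
  (aeval ![-s, X 1, X 2] (c 0)) * (aeval ![X 0 + s, X 1, X 2] w) *
      (-(X 0 + C Δ * s + C α))
    + (aeval ![-s, X 1, X 2] (c 1)) * (aeval ![X 0 + s, X 1, X 2] w) * C β

/-- Multiplication by `∂` on `B(-1)`. -/
noncomputable def dMul (a : BlockAlg) : BlockAlg :=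
  Finsupp.mapRange (Polynomial.X * ·) (by simp) a

/- Auxiliary lemmas -/

set_option maxHeartbeats 1000000

lemma aeval_comp (σ : Fin 3 → P3) (t : P3) (g : Polynomial ℂ) :
    aeval σ (Polynomial.aeval t g) = Polynomial.aeval (aeval σ t) g :=
  (Polynomial.aeval_algHom_apply _ _ _).symm

lemma act_add (Δ α β : ℂ) (a a' : BlockAlg) (w s : P3) :
    act Δ α β (a + a') w s = act Δ α β a w s + act Δ α β a' w s := by
  simp [act]; ring

lemma act_sum (Δ α β : ℂ) (a : BlockAlg) (w s : P3) :
    act Δ α β a w s = a.sum fun i f => act Δ α β (Finsupp.single i f) w s := by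
  induction a using Finsupp.induction with
  | zero => simp [act]
  | single_add i f a hi hf ih =>
      rw [act_add, Finsupp.sum_add_index' (fun k => by simp [act]),
        Finsupp.sum_single_index (by simp [act]), ih]
      intro k p q; rw [Finsupp.single_add, act_add]

lemma act_w_sum (Δ α β : ℂ) (a b : BlockAlg) (h : ℕ → Polynomial ℂ → P3) (s : P3) :
    act Δ α β a (b.sum h) s = b.sum fun j g => act Δ α β a (h j g) s := by
  classical
  rw [Finsupp.sum, Finsupp.sum]
  induction b.support using Finset.induction with
  | empty => simp [act]
  | insert _ _ hx ih =>
      rw [Finset.sum_insert hx, Finset.sum_insert hx, ← ih]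
      simp only [act, map_add]; ring

lemma act_act (Δ α β : ℂ) (a b : BlockAlg) (w s t : P3) :
    act Δ α β a (act Δ α β b w t) s
      = a.sum fun i f => b.sum fun j g =>
          act Δ α β (Finsupp.single i f) (act Δ α β (Finsupp.single j g) w t) s := by
  rw [act_sum Δ α β a]
  refine Finsupp.sum_congr fun i _ => ?_
  rw [act_sum Δ α β b w t, act_w_sum]

lemma act_act' (Δ α β : ℂ) (a b : BlockAlg) (w s t : P3) :
    act Δ α β b (act Δ α β a w s) t
      = a.sum fun i f => b.sum fun j g =>
          act Δ α β (Finsupp.single j g) (act Δ α β (Finsupp.single i f) w s) t := by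
  rw [act_sum Δ α β a w s, act_w_sum]
  exact Finsupp.sum_congr fun i _ => act_sum Δ α β b _ t

lemma actC_add (Δ α β : ℂ) (c c' : ℕ →₀ P3) (w s : P3) :
    actC Δ α β (c + c') w s = actC Δ α β c w s + actC Δ α β c' w s := by
  simp only [actC, Finsupp.add_apply, map_add]; ring

lemma actC_sum {ι : Type*} (Δ α β : ℂ) (b : ι →₀ Polynomial ℂ)
    (h : ι → Polynomial ℂ → (ℕ →₀ P3)) (w s : P3) (h0 : ∀ i, h i 0 = 0)
    (hadd : ∀ i p q, h i (p + q) = h i p + h i q) :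
    actC Δ α β (b.sum h) w s = b.sum fun j g => actC Δ α β (h j g) w s := by
  classical
  induction b using Finsupp.induction with
  | zero => simp [actC]
  | single_add i f a hi hf ih =>
      rw [Finsupp.sum_add_index' (fun k => h0 k) (fun k p q => hadd k p q),
        Finsupp.sum_single_index (h0 i), actC_add,
        Finsupp.sum_add_index' (fun k => by rw [h0]; simp [actC])
          (fun k p q => by rw [hadd, actC_add]),
        Finsupp.sum_single_index (by rw [h0]; simp [actC]), ih]

lemma BRterm_add (b : BlockAlg) (i : ℕ) (p r : Polynomial ℂ) :
    (b.sum fun j g =>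
        Finsupp.single (i + j)
          ((Polynomial.aeval (-(X 1) : P3) (p + r)) * (Polynomial.aeval ((X 0 : P3) + X 1) g) *
            (C ((i : ℂ) - 1) * X 0 + C ((i : ℂ) + (j : ℂ) - 2) * X 1)))
      = (b.sum fun j g =>
          Finsupp.single (i + j)
            ((Polynomial.aeval (-(X 1) : P3) p) * (Polynomial.aeval ((X 0 : P3) + X 1) g) *
              (C ((i : ℂ) - 1) * X 0 + C ((i : ℂ) + (j : ℂ) - 2) * X 1)))
        + (b.sum fun j g =>
          Finsupp.single (i + j)
            ((Polynomial.aeval (-(X 1) : P3) r) * (Polynomial.aeval ((X 0 : P3) + X 1) g) *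
              (C ((i : ℂ) - 1) * X 0 + C ((i : ℂ) + (j : ℂ) - 2) * X 1))) := by
  classical
  rw [Finsupp.sum, Finsupp.sum, Finsupp.sum, ← Finset.sum_add_distrib]
  refine Finset.sum_congr rfl fun j _ => ?_
  rw [map_add, ← Finsupp.single_add]
  congr 1; ring

lemma actC_BR (Δ α β : ℂ) (a b : BlockAlg) (w s : P3) :
    actC Δ α β (BR a b) w s
      = a.sum fun i f => b.sum fun j g =>
          actC Δ α β (Finsupp.single (i + j)
            ((Polynomial.aeval (-(X 1) : P3) f) * (Polynomial.aeval ((X 0 : P3) + X 1) g) *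
              (C ((i : ℂ) - 1) * X 0 + C ((i : ℂ) + (j : ℂ) - 2) * X 1))) w s := by
  rw [BR, actC_sum _ _ _ _ _ _ _ (fun i => by simp) (fun i p r => BRterm_add b i p r)]
  refine Finsupp.sum_congr fun i _ => ?_
  rw [actC_sum _ _ _ _ _ _ _ (fun j => by simp) (fun j p r => by
    rw [map_add, ← Finsupp.single_add]
    congr 1; ring)]

lemma act_single_ge2 (Δ α β : ℂ) (n : ℕ) (f : Polynomial ℂ) (w s : P3) :
    act Δ α β (Finsupp.single (n + 2) f) w s = 0 := by
  rw [act, Finsupp.single_apply, Finsupp.single_apply, if_neg (by omega), if_neg (by omega)]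
  simp

lemma act_w_zero (Δ α β : ℂ) (a : BlockAlg) (s : P3) : act Δ α β a 0 s = 0 := by
  simp [act]

lemma actC_single_ge2 (Δ α β : ℂ) (k : ℕ) (hk : 2 ≤ k) (E : P3) (w s : P3) :
    actC Δ α β (Finsupp.single k E) w s = 0 := by
  rw [actC, Finsupp.single_apply, Finsupp.single_apply, if_neg (by omega), if_neg (by omega)]
  simp

lemma key (Δ α β : ℂ) (i j : ℕ) (f g q : Polynomial ℂ) :
    actC Δ α β (Finsupp.single (i + j)
      ((Polynomial.aeval (-(X 1) : P3) f) * (Polynomial.aeval ((X 0 : P3) + X 1) g) *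
        (C ((i : ℂ) - 1) * X 0 + C ((i : ℂ) + (j : ℂ) - 2) * X 1)))
      (Polynomial.aeval (X 0 : P3) q) (X 1 + X 2)
    = act Δ α β (Finsupp.single i f)
        (act Δ α β (Finsupp.single j g) (Polynomial.aeval (X 0 : P3) q) (X 2)) (X 1)
      - act Δ α β (Finsupp.single j g)
        (act Δ α β (Finsupp.single i f) (Polynomial.aeval (X 0 : P3) q) (X 1)) (X 2) := by
  rcases i with _ | _ | n
  · rcases j with _ | _ | m
    · simp only [act, actC, Finsupp.single_apply, reduceIte, Nat.reduceAdd, Nat.reduceEqDiff,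
        map_add, map_mul, map_neg, map_zero, map_one,
        map_ofNat, aeval_comp, aeval_X, aeval_C, algebraMap_eq,
        Matrix.cons_val_zero, Matrix.cons_val_one, Matrix.head_cons, Matrix.cons_val_two,
        Matrix.tail_cons]
      norm_num
      simp only [show ((-(X 1 + X 2) + X 1 : P3)) = -(X 2) from by ring,
        show ((X 0 + X 1 + X 2 : P3)) = X 0 + (X 1 + X 2) from by ring,
        show ((X 0 + X 2 + X 1 : P3)) = X 0 + (X 1 + X 2) from by ring,
        show ((C (2:ℂ) : P3)) = 2 from map_ofNat C 2]
      ring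
    · simp only [act, actC, Finsupp.single_apply, reduceIte, Nat.reduceAdd, Nat.reduceEqDiff,
        map_add, map_mul, map_neg, map_zero, map_one,
        map_ofNat, aeval_comp, aeval_X, aeval_C, algebraMap_eq,
        Matrix.cons_val_zero, Matrix.cons_val_one, Matrix.head_cons, Matrix.cons_val_two,
        Matrix.tail_cons]
      norm_num
      simp only [show ((-(X 1 + X 2) + X 1 : P3)) = -(X 2) from by ring,
        show ((X 0 + X 1 + X 2 : P3)) = X 0 + (X 1 + X 2) from by ring,
        show ((X 0 + X 2 + X 1 : P3)) = X 0 + (X 1 + X 2) from by ring,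
        show ((C (2:ℂ) : P3)) = 2 from map_ofNat C 2]
      ring
    · have h2 : ∀ w s, act Δ α β (Finsupp.single (m + 1 + 1) g) w s = 0 :=
        fun w s => act_single_ge2 Δ α β m g w s
      rw [h2, act_w_zero, h2, actC_single_ge2 Δ α β _ (by omega)]
      simp
  · rcases j with _ | _ | m
    · simp only [act, actC, Finsupp.single_apply, reduceIte, Nat.reduceAdd, Nat.reduceEqDiff,
        map_add, map_mul, map_neg, map_zero, map_one,
        map_ofNat, aeval_comp, aeval_X, aeval_C, algebraMap_eq,
        Matrix.cons_val_zero, Matrix.cons_val_one, Matrix.head_cons, Matrix.cons_val_two,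
        Matrix.tail_cons]
      norm_num
      simp only [show ((-(X 1 + X 2) + X 1 : P3)) = -(X 2) from by ring,
        show ((X 0 + X 1 + X 2 : P3)) = X 0 + (X 1 + X 2) from by ring,
        show ((X 0 + X 2 + X 1 : P3)) = X 0 + (X 1 + X 2) from by ring,
        show ((C (2:ℂ) : P3)) = 2 from map_ofNat C 2]
      ring
    · simp only [act, actC, Finsupp.single_apply, reduceIte, Nat.reduceAdd, Nat.reduceEqDiff,
        map_add, map_mul, map_neg, map_zero, map_one,
        map_ofNat, aeval_comp, aeval_X, aeval_C, algebraMap_eq,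
        Matrix.cons_val_zero, Matrix.cons_val_one, Matrix.head_cons, Matrix.cons_val_two,
        Matrix.tail_cons]
      norm_num
      simp only [show ((-(X 1 + X 2) + X 1 : P3)) = -(X 2) from by ring,
        show ((X 0 + X 1 + X 2 : P3)) = X 0 + (X 1 + X 2) from by ring,
        show ((X 0 + X 2 + X 1 : P3)) = X 0 + (X 1 + X 2) from by ring,
        show ((C (2:ℂ) : P3)) = 2 from map_ofNat C 2]
      ring
    · have h2 : ∀ w s, act Δ α β (Finsupp.single (m + 1 + 1) g) w s = 0 :=
        fun w s => act_single_ge2 Δ α β m g w s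
      rw [h2, act_w_zero, h2, actC_single_ge2 Δ α β _ (by omega)]
      simp
  · have h2 : ∀ w s, act Δ α β (Finsupp.single (n + 1 + 1) f) w s = 0 :=
      fun w s => act_single_ge2 Δ α β n f w s
    rw [h2, h2, act_w_zero, actC_single_ge2 Δ α β _ (by omega)]
    simp

/-- For `p = -1` and any `Δ, α, β ∈ ℂ`, the free rank-one module `M = ℂ[∂]v` with
`L_0 λ v = -(∂+Δλ+α)v`, `L_1 λ v = βv`, `L_i λ v = 0` for `i ≥ 2`, is a conformal
module over `B(-1)`: `(∂a) λ v = -λ(a λ v)`, `a λ (∂v) = (∂+λ)(a λ v)`, and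
`[a λ b]_{λ+μ} v = a λ (b μ v) - b μ (a λ v)`. -/
theorem M_Delta_alpha_beta_is_conformal_module (Δ α β : ℂ) :
    (∀ (a : BlockAlg) (g : Polynomial ℂ),
      act Δ α β (dMul a) (Polynomial.aeval (X 0 : P3) g) (X 1)
        = -(X 1) * act Δ α β a (Polynomial.aeval (X 0 : P3) g) (X 1)) ∧
    (∀ (a : BlockAlg) (g : Polynomial ℂ),
      act Δ α β a (Polynomial.aeval (X 0 : P3) (Polynomial.X * g)) (X 1)
        = (X 0 + X 1) * act Δ α β a (Polynomial.aeval (X 0 : P3) g) (X 1)) ∧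
    (∀ (a b : BlockAlg) (g : Polynomial ℂ),
      actC Δ α β (BR a b) (Polynomial.aeval (X 0 : P3) g) (X 1 + X 2)
        = act Δ α β a (act Δ α β b (Polynomial.aeval (X 0 : P3) g) (X 2)) (X 1)
          - act Δ α β b (act Δ α β a (Polynomial.aeval (X 0 : P3) g) (X 1)) (X 2)) := by
  refine ⟨?_, ?_, ?_⟩
  · intro a g
    simp only [act, dMul, Finsupp.mapRange_apply, map_mul, Polynomial.aeval_X]
    ring
  · intro a g
    simp only [act, map_mul, aeval_comp, aeval_X, Polynomial.aeval_X, Matrix.cons_val_zero]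
    ring
  · intro a b q
    rw [actC_BR, act_act, act_act', ← Finsupp.sum_sub]
    refine Finsupp.sum_congr fun i _ => ?_
    rw [← Finsupp.sum_sub]
    exact Finsupp.sum_congr fun j _ => key Δ α β i j _ _ q
end
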